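/- Let K ≥ 1 be an integer, L > 0, ρ > 0, m ≥ 1, and C_f, M₁, M_f ≥ 0. Set α_k = ρ/(k+1) for k = 0, ..., K−1 and A = Σ_{k=0}^{K−1} α_k. Let e_0, ..., e_{K−1} ≥ 0 with e_k ≤ m C_f² for all k, and β_0, ..., β_{K−1} ≥ 0 with β_k ≤ M₁/(K+1) for all k, and suppose Σ_{k=0}^{K−1} (α_k/2 − L α_k²) e_k ≤ Σ_{k=0}^{K−1} ( α_k C_f √(β_k) + L α_k² β_k ) + M_f. Then (1/A) Σ_{k=0}^{K−1} α_k e_k ≤ L m C_f² ρ π²/(3 ln(K+1)) + 2 C_f √(M₁)/√(K+1) + L ρ M₁ π²/(3 (K+1) ln(K+1)) + 2 M_f/(ρ ln(K+1)). -/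

import Mathlib

open Finset

lemma aux_basel (K : ℕ) :
    ∑ k ∈ Finset.range K, (1:ℝ)/((k:ℝ)+1)^2 ≤ Real.pi ^ 2 / 6 := by
  have h1 : ∑ k ∈ Finset.range K, (1:ℝ)/((k:ℝ)+1)^2
      = ∑ n ∈ Finset.Ico 1 (K+1), (1:ℝ)/((n:ℝ))^2 := by
    rw [Finset.sum_Ico_eq_sum_range]
    simp only [Nat.add_sub_cancel]
    apply Finset.sum_congr rfl
    intro i _
    push_cast
    ring_nf
  rw [h1]
  exact sum_le_hasSum _ (fun i _ => by positivity) hasSum_zeta_two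

lemma aux_log_le_harmonic (K : ℕ) :
    Real.log (K + 1) ≤ ∑ k ∈ Finset.range K, (1:ℝ)/((k:ℝ)+1) := by
  have h1 := Finset.sum_range_sub (fun n : ℕ => Real.log ((n:ℝ)+1)) K
  push_cast at h1
  norm_num at h1
  rw [show Real.log ((K:ℝ) + 1) = ∑ k ∈ Finset.range K,
      (Real.log ((k:ℝ)+1+1) - Real.log ((k:ℝ)+1)) by rw [Finset.sum_sub_distrib, h1]]
  apply Finset.sum_le_sum
  intro k _
  have hk1 : (0:ℝ) < (k:ℝ) + 1 := by positivity
  have hd : Real.log ((k:ℝ)+1+1) - Real.log ((k:ℝ)+1)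
      = Real.log (((k:ℝ)+1+1) / ((k:ℝ)+1)) := by
    rw [Real.log_div (by positivity) (by positivity)]
  rw [hd]
  have := Real.log_le_sub_one_of_pos (show (0:ℝ) < ((k:ℝ)+1+1) / ((k:ℝ)+1) by positivity)
  have heq : ((k:ℝ)+1+1) / ((k:ℝ)+1) - 1 = 1/((k:ℝ)+1) := by
    field_simp
    ring
  linarith [heq ▸ this]

/-- Deterministic form of Corollary 4.3(a): with diminishing outer steps
`α k = ρ/(k+1)`, `A = Σ α_k`, bounds `e k ≤ m C_f²` and `β k ≤ M₁/(K+1)`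
(from `S = (K+1)²` inner steps), one has
`(1/A) Σ α_k e_k ≤ L m C_f² ρ π²/(3 ln(K+1)) + 2 C_f √M₁/√(K+1)
  + L ρ M₁ π²/(3(K+1) ln(K+1)) + 2 M_f/(ρ ln(K+1))`. -/
theorem msmd_rate_fixed_inner_varying_outer
    (K : ℕ) (hK : 1 ≤ K) (m : ℕ) (hm : 1 ≤ m)
    (L ρ Cf M₁ Mf : ℝ)
    (hL : 0 < L) (hρ : 0 < ρ)
    (hCf : 0 ≤ Cf) (hM₁ : 0 ≤ M₁) (hMf : 0 ≤ Mf)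
    (α : ℕ → ℝ) (hα : ∀ k, α k = ρ / (k + 1))
    (A : ℝ) (hA : A = ∑ k ∈ Finset.range K, α k)
    (e β : ℕ → ℝ)
    (he0 : ∀ k < K, 0 ≤ e k) (heb : ∀ k < K, e k ≤ m * Cf ^ 2)
    (hβ0 : ∀ k < K, 0 ≤ β k) (hβ : ∀ k < K, β k ≤ M₁ / (K + 1))
    (hsum : ∑ k ∈ Finset.range K, (α k / 2 - L * α k ^ 2) * e k ≤
      (∑ k ∈ Finset.range K, (α k * Cf * Real.sqrt (β k) + L * α k ^ 2 * β k)) + Mf) :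
    (1 / A) * ∑ k ∈ Finset.range K, α k * e k ≤
      L * m * Cf ^ 2 * ρ * Real.pi ^ 2 / (3 * Real.log (K + 1))
        + 2 * Cf * Real.sqrt M₁ / Real.sqrt (K + 1)
        + L * ρ * M₁ * Real.pi ^ 2 / (3 * (K + 1) * Real.log (K + 1))
        + 2 * Mf / (ρ * Real.log (K + 1)) := by
  have hK1 : (0:ℝ) < (K:ℝ) + 1 := by positivity
  have hαpos : ∀ k, 0 < α k := fun k => by rw [hα k]; positivity
  have hαsq : ∀ k : ℕ, α k ^ 2 = ρ^2 * (1/((k:ℝ)+1)^2) := fun k => by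
    rw [hα k]; field_simp
  -- log positivity
  have hlog : 0 < Real.log ((K:ℝ) + 1) := by
    apply Real.log_pos
    have : (1:ℝ) ≤ (K:ℝ) := by exact_mod_cast hK
    linarith
  -- A ≥ ρ log(K+1)
  have hAge : ρ * Real.log ((K:ℝ)+1) ≤ A := by
    have h1 := aux_log_le_harmonic K
    have h2 : A = ρ * ∑ k ∈ Finset.range K, (1:ℝ)/((k:ℝ)+1) := by
      rw [hA, Finset.mul_sum]
      exact Finset.sum_congr rfl fun k _ => by rw [hα k]; ring
    rw [h2]
    exact mul_le_mul_of_nonneg_left h1 hρ.le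
  have hApos : 0 < A := lt_of_lt_of_le (by positivity) hAge
  -- Basel bound
  have hbasel := aux_basel K
  -- Bound 1: ∑ α² e ≤ m Cf² ρ² π²/6
  have hB1 : ∑ k ∈ Finset.range K, α k ^ 2 * e k
      ≤ (m:ℝ) * Cf^2 * (ρ^2 * (Real.pi^2/6)) := by
    calc ∑ k ∈ Finset.range K, α k ^ 2 * e k
        ≤ ∑ k ∈ Finset.range K, (ρ^2 * (1/((k:ℝ)+1)^2)) * ((m:ℝ) * Cf^2) := by
          apply Finset.sum_le_sum
          intro k hk
          rw [hαsq k]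
          exact mul_le_mul_of_nonneg_left (heb k (Finset.mem_range.mp hk)) (by positivity)
      _ = (ρ^2 * ((m:ℝ)*Cf^2)) * ∑ k ∈ Finset.range K, (1:ℝ)/((k:ℝ)+1)^2 := by
          rw [Finset.mul_sum]; exact Finset.sum_congr rfl fun k _ => by ring
      _ ≤ (ρ^2 * ((m:ℝ)*Cf^2)) * (Real.pi^2/6) := by
          exact mul_le_mul_of_nonneg_left hbasel (by positivity)
      _ = (m:ℝ) * Cf^2 * (ρ^2 * (Real.pi^2/6)) := by ring
  -- Bound 3: ∑ α² β ≤ (M₁/(K+1)) ρ² π²/6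
  have hB3 : ∑ k ∈ Finset.range K, L * α k ^ 2 * β k
      ≤ L * (M₁/((K:ℝ)+1)) * (ρ^2 * (Real.pi^2/6)) := by
    calc ∑ k ∈ Finset.range K, L * α k ^ 2 * β k
        ≤ ∑ k ∈ Finset.range K, L * (ρ^2 * (1/((k:ℝ)+1)^2)) * (M₁/((K:ℝ)+1)) := by
          apply Finset.sum_le_sum
          intro k hk
          rw [hαsq k]
          have := hβ k (Finset.mem_range.mp hk)
          have hnn : (0:ℝ) ≤ L * (ρ^2 * (1/((k:ℝ)+1)^2)) := by positivity
          exact mul_le_mul_of_nonneg_left this hnn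
      _ = (L * (M₁/((K:ℝ)+1)) * ρ^2) * ∑ k ∈ Finset.range K, (1:ℝ)/((k:ℝ)+1)^2 := by
          rw [Finset.mul_sum]; exact Finset.sum_congr rfl fun k _ => by ring
      _ ≤ (L * (M₁/((K:ℝ)+1)) * ρ^2) * (Real.pi^2/6) := by
          exact mul_le_mul_of_nonneg_left hbasel (by positivity)
      _ = L * (M₁/((K:ℝ)+1)) * (ρ^2 * (Real.pi^2/6)) := by ring
  -- Bound 2: ∑ α Cf √β ≤ Cf (√M₁/√(K+1)) A
  have hB2 : ∑ k ∈ Finset.range K, α k * Cf * Real.sqrt (β k)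
      ≤ Cf * (Real.sqrt M₁ / Real.sqrt ((K:ℝ)+1)) * A := by
    have hsq : ∀ k < K, Real.sqrt (β k) ≤ Real.sqrt M₁ / Real.sqrt ((K:ℝ)+1) := by
      intro k hk
      have h1 : Real.sqrt (β k) ≤ Real.sqrt (M₁/((K:ℝ)+1)) := by
        apply Real.sqrt_le_sqrt
        exact_mod_cast hβ k hk
      rwa [Real.sqrt_div hM₁] at h1
    calc ∑ k ∈ Finset.range K, α k * Cf * Real.sqrt (β k)
        ≤ ∑ k ∈ Finset.range K, α k * Cf * (Real.sqrt M₁ / Real.sqrt ((K:ℝ)+1)) := by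
          apply Finset.sum_le_sum
          intro k hk
          exact mul_le_mul_of_nonneg_left (hsq k (Finset.mem_range.mp hk))
            (mul_nonneg (hαpos k).le hCf)
      _ = Cf * (Real.sqrt M₁ / Real.sqrt ((K:ℝ)+1)) * A := by
          rw [hA, Finset.mul_sum]
          exact Finset.sum_congr rfl fun k _ => by ring
  -- linearity identity
  have hkey : ∑ k ∈ Finset.range K, α k * e k
      = 2 * ∑ k ∈ Finset.range K, (α k / 2 - L * α k ^ 2) * e k
        + 2 * L * ∑ k ∈ Finset.range K, α k ^ 2 * e k := by
    rw [Finset.mul_sum, Finset.mul_sum, ← Finset.sum_add_distrib]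
    exact Finset.sum_congr rfl fun k _ => by ring
  have hsplit : ∑ k ∈ Finset.range K, (α k * Cf * Real.sqrt (β k) + L * α k ^ 2 * β k)
      = ∑ k ∈ Finset.range K, α k * Cf * Real.sqrt (β k)
        + ∑ k ∈ Finset.range K, L * α k ^ 2 * β k := Finset.sum_add_distrib
  -- combined bound on S1
  set S1 := ∑ k ∈ Finset.range K, α k * e k with hS1def
  have hS1 : S1 ≤ 2 * L * ((m:ℝ) * Cf^2 * (ρ^2 * (Real.pi^2/6)))
      + 2 * (Cf * (Real.sqrt M₁ / Real.sqrt ((K:ℝ)+1)) * A)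
      + 2 * (L * (M₁/((K:ℝ)+1)) * (ρ^2 * (Real.pi^2/6))) + 2 * Mf := by
    rw [hsplit] at hsum
    have h2LY := mul_le_mul_of_nonneg_left hB1 (by linarith : (0:ℝ) ≤ 2 * L)
    linarith [hkey, hB2, hB3, hsum, h2LY]
  -- final step
  set T1 := L * (m:ℝ) * Cf ^ 2 * ρ * Real.pi ^ 2 / (3 * Real.log ((K:ℝ) + 1))
  set T2 := 2 * Cf * Real.sqrt M₁ / Real.sqrt ((K:ℝ) + 1)
  set T3 := L * ρ * M₁ * Real.pi ^ 2 / (3 * ((K:ℝ) + 1) * Real.log ((K:ℝ) + 1))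
  set T4 := 2 * Mf / (ρ * Real.log ((K:ℝ) + 1))
  have hT1 : 0 ≤ T1 := by positivity
  have hT3 : 0 ≤ T3 := by positivity
  have hT4 : 0 ≤ T4 := by positivity
  have hNid : (T1 + T3 + T4) * (ρ * Real.log ((K:ℝ)+1))
      = 2 * L * ((m:ℝ) * Cf^2 * (ρ^2 * (Real.pi^2/6)))
        + 2 * (L * (M₁/((K:ℝ)+1)) * (ρ^2 * (Real.pi^2/6))) + 2 * Mf := by
    simp only [T1, T3, T4]
    field_simp
    ring
  rw [one_div, inv_mul_eq_div, div_le_iff₀ hApos]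
  have hstep : (T1 + T3 + T4) * (ρ * Real.log ((K:ℝ)+1)) ≤ (T1 + T3 + T4) * A :=
    mul_le_mul_of_nonneg_left hAge (by linarith)
  have hT2A : T2 * A = 2 * (Cf * (Real.sqrt M₁ / Real.sqrt ((K:ℝ)+1)) * A) := by
    simp only [T2]; ring
  linarith [hS1, hNid, hstep, hT2A]
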